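/- If $\kappa: (\Omega_1,\mu_1) \to \Omega_2$ is a statistic sufficient for the parameter $x \in M$ of a parametrized measure model $(M,\Omega_1,\mu_1,p_1)$, then the Fisher quadratic form is preserved: for all $x \in M$ and tangent vectors $V$, $\int_{\Omega_1} (\partial_V \ln \bar p_1(x,\omega_1))^2\, dp_1(x) = \int_{\Omega_2} (\partial_V \ln \kappa_*(\bar p_1)(x,\omega_2))^2\, d\kappa_*(p_1(x))$. -/

import Mathlib

open MeasureTheory ENNReal
set_option maxHeartbeats 1000000

private lemma map_withDensity_comp'77 {Ω₁ Ω₂ : Type*} [MeasurableSpace Ω₁] [MeasurableSpace Ω₂]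
    (μ : Measure Ω₁) {κ : Ω₁ → Ω₂} (hκ : Measurable κ) {g : Ω₂ → ℝ≥0∞} (hg : Measurable g) :
    Measure.map κ (μ.withDensity (fun ω => g (κ ω))) = (Measure.map κ μ).withDensity g := by
  ext A hA
  rw [Measure.map_apply hκ hA, withDensity_apply _ (hκ hA), withDensity_apply _ hA,
    setLIntegral_map hA hg hκ]

/-- Invariance of the Fisher quadratic form under a sufficient statistic: if `κ` is
sufficient for the parameter of a 2-integrable parametrized measure model
`(M, Ω₁, μ₁, p₁)`, then for all `x` and tangent vectors `V`,
`∫_{Ω₁} (∂_V ln p̄₁(x,·))² dp₁(x) = ∫_{Ω₂} (∂_V ln κ_*(p̄₁)(x,·))² dκ_*(p₁(x))`. -/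
theorem stmt_7 {E Ω₁ Ω₂ : Type*} [NormedAddCommGroup E] [NormedSpace ℝ E]
    [MeasurableSpace Ω₁] [MeasurableSpace Ω₂]
    (μ₁ : Measure Ω₁) [IsFiniteMeasure μ₁]
    (κ : Ω₁ → Ω₂) (hκ : Measurable κ)
    (p₁ : E → Ω₁ → ℝ) (hp₁pos : ∀ x ω, 0 < p₁ x ω)
    (hp₁meas : ∀ x, Measurable (p₁ x)) (hp₁int : ∀ x, Integrable (p₁ x) μ₁)
    -- `q x` is the density of the transformed model: `κ_*(p̄₁)(x,·) = d(κ_*p₁(x))/d(κ_*μ₁)`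
    (q : E → Ω₂ → ℝ) (hqpos : ∀ x ω₂, 0 < q x ω₂) (hqmeas : ∀ x, Measurable (q x))
    (hq : ∀ x, Measure.map κ (μ₁.withDensity (fun ω => ENNReal.ofReal (p₁ x ω)))
        = (Measure.map κ μ₁).withDensity (fun ω₂ => ENNReal.ofReal (q x ω₂)))
    -- differentiability of the log-likelihoods in the parameter
    (hdiff : ∀ ω x, DifferentiableAt ℝ (fun y => Real.log (p₁ y ω)) x)
    (hdiff' : ∀ ω₂ x, DifferentiableAt ℝ (fun y => Real.log (q y ω₂)) x)
    -- 2-integrability of the scores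
    (hL2 : ∀ x (V : E), MemLp (fun ω => fderiv ℝ (fun y => Real.log (p₁ y ω)) x V) 2
        (μ₁.withDensity (fun ω => ENNReal.ofReal (p₁ x ω))))
    (hL2' : ∀ x (V : E), MemLp (fun ω₂ => fderiv ℝ (fun y => Real.log (q y ω₂)) x V) 2
        ((Measure.map κ μ₁).withDensity (fun ω₂ => ENNReal.ofReal (q x ω₂))))
    -- sufficiency of `κ`: Fisher–Neyman factorization of the densities
    (hsuff : ∃ (s : E → Ω₂ → ℝ) (t : Ω₁ → ℝ),
        (∀ x, Integrable (s x) (Measure.map κ μ₁)) ∧ Integrable t μ₁ ∧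
        ∀ x, ∀ᵐ ω ∂μ₁, p₁ x ω = s x (κ ω) * t ω) :
    ∀ x (V : E),
      ∫ ω, (fderiv ℝ (fun y => Real.log (p₁ y ω)) x V) ^ 2
          ∂(μ₁.withDensity (fun ω => ENNReal.ofReal (p₁ x ω)))
        = ∫ ω₂, (fderiv ℝ (fun y => Real.log (q y ω₂)) x V) ^ 2
          ∂((Measure.map κ μ₁).withDensity (fun ω₂ => ENNReal.ofReal (q x ω₂))) := by
  obtain ⟨s, t, hsint, htint, hfact⟩ := hsuff
  intro x V
  set μ₂ := Measure.map κ μ₁ with hμ₂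
  -- a measurable representative of `t`
  obtain ⟨t₀, ht₀meas, ht₀⟩ : ∃ t₀ : Ω₁ → ℝ, Measurable t₀ ∧ t =ᵐ[μ₁] t₀ :=
    ⟨htint.aemeasurable.mk t, htint.aemeasurable.measurable_mk, htint.aemeasurable.ae_eq_mk⟩
  have ht₀int : Integrable t₀ μ₁ := htint.congr ht₀
  set T : Measure Ω₁ := μ₁.withDensity (fun ω => ENNReal.ofReal |t₀ ω|) with hT
  haveI hTfin : IsFiniteMeasure T := by
    refine isFiniteMeasure_withDensity ?_
    exact ht₀int.abs.lintegral_lt_top.ne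
  have hTac : Measure.map κ T ≪ μ₂ :=
    (withDensity_absolutelyContinuous μ₁ _).map hκ
  set c : Ω₂ → ℝ≥0∞ := (Measure.map κ T).rnDeriv μ₂ with hc
  have hcmeas : Measurable c := Measure.measurable_rnDeriv _ _
  have hcT : μ₂.withDensity c = Measure.map κ T :=
    Measure.withDensity_rnDeriv_eq _ _ hTac
  -- factorization with nonnegative, measurable-ish factors
  have hfact' : ∀ y, ∀ᵐ ω ∂μ₁, p₁ y ω = |s y (κ ω)| * |t₀ ω| := by
    intro y
    filter_upwards [hfact y, ht₀] with ω h h'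
    have h2 : p₁ y ω = s y (κ ω) * t₀ ω := by rw [h, h']
    calc p₁ y ω = |p₁ y ω| := (abs_of_pos (hp₁pos y ω)).symm
      _ = |s y (κ ω)| * |t₀ ω| := by rw [h2, abs_mul]
  -- Claim A : q y = c • |s y| a.e. on Ω₂
  have hA : ∀ y, ∀ᵐ ω₂ ∂μ₂,
      ENNReal.ofReal (q y ω₂) = c ω₂ * ENNReal.ofReal |s y ω₂| := by
    intro y
    obtain ⟨s₀, hs₀meas, hs₀⟩ : ∃ s₀ : Ω₂ → ℝ, Measurable s₀ ∧ s y =ᵐ[μ₂] s₀ :=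
      ⟨(hsint y).aemeasurable.mk _, (hsint y).aemeasurable.measurable_mk,
        (hsint y).aemeasurable.ae_eq_mk⟩
    have hs₀κ : (fun ω => s y (κ ω)) =ᵐ[μ₁] (fun ω => s₀ (κ ω)) :=
      ae_eq_comp hκ.aemeasurable hs₀
    have key : μ₂.withDensity (fun ω₂ => ENNReal.ofReal (q y ω₂))
        = μ₂.withDensity (fun ω₂ => c ω₂ * ENNReal.ofReal |s₀ ω₂|) := by
      calc μ₂.withDensity (fun ω₂ => ENNReal.ofReal (q y ω₂))
          = Measure.map κ (μ₁.withDensity (fun ω => ENNReal.ofReal (p₁ y ω))) := (hq y).symm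
        _ = Measure.map κ (μ₁.withDensity
              ((fun ω => ENNReal.ofReal |t₀ ω|) * (fun ω => ENNReal.ofReal |s₀ (κ ω)|))) := by
            refine congrArg _ (withDensity_congr_ae ?_)
            filter_upwards [hfact' y, hs₀κ] with ω h h'
            simp only [Pi.mul_apply]
            rw [h, h', ← ENNReal.ofReal_mul (abs_nonneg _), mul_comm]
        _ = Measure.map κ (T.withDensity (fun ω => ENNReal.ofReal |s₀ (κ ω)|)) := by
            rw [hT]
            exact congrArg (Measure.map κ)
              (withDensity_mul μ₁ (ht₀meas.abs.ennreal_ofReal)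
                (((hs₀meas.abs.ennreal_ofReal).comp hκ :
                  Measurable fun ω => ENNReal.ofReal |s₀ (κ ω)|)))
        _ = (Measure.map κ T).withDensity (fun ω₂ => ENNReal.ofReal |s₀ ω₂|) :=
            map_withDensity_comp'77 T hκ (hs₀meas.abs.ennreal_ofReal)
        _ = (μ₂.withDensity c).withDensity (fun ω₂ => ENNReal.ofReal |s₀ ω₂|) := by rw [hcT]
        _ = μ₂.withDensity ((fun ω₂ => c ω₂) * fun ω₂ => ENNReal.ofReal |s₀ ω₂|) :=
            (withDensity_mul μ₂ hcmeas hs₀meas.abs.ennreal_ofReal).symm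
        _ = μ₂.withDensity (fun ω₂ => c ω₂ * ENNReal.ofReal |s₀ ω₂|) := rfl
    have hfin : ∫⁻ ω₂, ENNReal.ofReal (q y ω₂) ∂μ₂ ≠ ∞ := by
      have h1 : μ₂.withDensity (fun ω₂ => ENNReal.ofReal (q y ω₂)) Set.univ < ∞ := by
        rw [← hq y, Measure.map_apply hκ MeasurableSet.univ, Set.preimage_univ,
          withDensity_apply _ MeasurableSet.univ, Measure.restrict_univ]
        exact (hp₁int y).lintegral_lt_top
      rw [withDensity_apply _ MeasurableSet.univ, Measure.restrict_univ] at h1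
      exact h1.ne
    have hae := (withDensity_eq_iff ((hqmeas y).ennreal_ofReal.aemeasurable)
      ((hcmeas.mul hs₀meas.abs.ennreal_ofReal).aemeasurable) hfin).mp key
    filter_upwards [hae, hs₀] with ω₂ h h'
    rw [h, h']; rfl
  -- Claim B : the log-likelihood ratio is parameter independent
  have hB : ∀ y, ∀ᵐ ω ∂μ₁,
      Real.log (p₁ y ω) - Real.log (q y (κ ω))
        = Real.log |t₀ ω| - Real.log (c (κ ω)).toReal := by
    intro y
    have hAκ : (fun ω => ENNReal.ofReal (q y (κ ω)))
        =ᵐ[μ₁] (fun ω => c (κ ω) * ENNReal.ofReal |s y (κ ω)|) :=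
      ae_eq_comp hκ.aemeasurable (hA y)
    filter_upwards [hAκ, hfact' y] with ω hq' hp'
    have hqp := hqpos y (κ ω)
    have hspos : 0 < |s y (κ ω)| := by
      rcases (abs_nonneg (s y (κ ω))).lt_or_eq with h | h
      · exact h
      · exfalso; rw [← h, zero_mul] at hp'; exact (hp₁pos y ω).ne' hp'
    have htpos : 0 < |t₀ ω| := by
      rcases (abs_nonneg (t₀ ω)).lt_or_eq with h | h
      · exact h
      · exfalso; rw [← h, mul_zero] at hp'; exact (hp₁pos y ω).ne' hp'
    have hcne0 : c (κ ω) ≠ 0 := by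
      intro h0
      rw [h0, zero_mul, ENNReal.ofReal_eq_zero] at hq'
      exact absurd hq' (not_le.mpr hqp)
    have hcnetop : c (κ ω) ≠ ∞ := by
      intro htop
      have hs' : ENNReal.ofReal |s y (κ ω)| ≠ 0 := by
        simpa [ENNReal.ofReal_eq_zero, not_le] using hspos
      rw [htop, ENNReal.top_mul hs'] at hq'
      exact ENNReal.ofReal_ne_top hq'
    have hctpos : 0 < (c (κ ω)).toReal := ENNReal.toReal_pos hcne0 hcnetop
    have hqeq : q y (κ ω) = (c (κ ω)).toReal * |s y (κ ω)| := by
      have h2 := congrArg ENNReal.toReal hq'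
      rwa [ENNReal.toReal_ofReal hqp.le, ENNReal.toReal_mul,
        ENNReal.toReal_ofReal (abs_nonneg _)] at h2
    rw [hp', hqeq, Real.log_mul hspos.ne' htpos.ne', Real.log_mul hctpos.ne' hspos.ne']
    ring
  -- Claim C : the scores agree a.e.
  have hC : ∀ᵐ ω ∂μ₁,
      fderiv ℝ (fun y => Real.log (p₁ y ω)) x V
        = fderiv ℝ (fun y => Real.log (q y (κ ω))) x V := by
    have hall : ∀ᵐ ω ∂μ₁, ∀ r : ℚ,
        Real.log (p₁ (x + (r : ℝ) • V) ω) - Real.log (q (x + (r : ℝ) • V) (κ ω))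
          = Real.log |t₀ ω| - Real.log (c (κ ω)).toReal :=
      ae_all_iff.mpr fun r => hB (x + (r : ℝ) • V)
    filter_upwards [hall, hB x] with ω h1 h2
    have hline : ∀ r : ℝ, HasDerivAt (fun u : ℝ => x + u • V) V r := by
      intro r
      simpa using ((hasDerivAt_id r).smul_const V).const_add x
    have hd1 : ∀ r : ℝ, HasDerivAt (fun u : ℝ => Real.log (p₁ (x + u • V) ω))
        (fderiv ℝ (fun y => Real.log (p₁ y ω)) (x + r • V) V) r := fun r =>
      by have h := (hdiff ω (x + r • V)).hasFDerivAt.comp_hasDerivAt r (hline r); exact h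
    have hd2 : ∀ r : ℝ, HasDerivAt (fun u : ℝ => Real.log (q (x + u • V) (κ ω)))
        (fderiv ℝ (fun y => Real.log (q y (κ ω))) (x + r • V) V) r := fun r =>
      by have h := (hdiff' (κ ω) (x + r • V)).hasFDerivAt.comp_hasDerivAt r (hline r); exact h
    set f : ℝ → ℝ := fun r =>
      Real.log (p₁ (x + r • V) ω) - Real.log (q (x + r • V) (κ ω)) with hfdef
    have hcont : Continuous f :=
      continuous_iff_continuousAt.mpr fun r =>
        ((hd1 r).continuousAt.sub (hd2 r).continuousAt)
    have hfconst : f = fun _ => Real.log |t₀ ω| - Real.log (c (κ ω)).toReal := by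
      refine hcont.ext_on Rat.denseRange_cast continuous_const ?_
      rintro _ ⟨r, rfl⟩
      exact h1 r
    have hD : HasDerivAt f (fderiv ℝ (fun y => Real.log (p₁ y ω)) x V
        - fderiv ℝ (fun y => Real.log (q y (κ ω))) x V) 0 := by
      have h3 := (hd1 0).sub (hd2 0)
      simp only [zero_smul, add_zero] at h3; exact h3
    have hD0 : HasDerivAt f 0 0 := by rw [hfconst]; exact hasDerivAt_const _ _
    have h4 := hD.unique hD0
    linarith [h4]
  -- conclude
  set ν : Measure Ω₁ := μ₁.withDensity (fun ω => ENNReal.ofReal (p₁ x ω)) with hν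
  have hνac : ν ≪ μ₁ := withDensity_absolutelyContinuous _ _
  set g : Ω₂ → ℝ := fun ω₂ => fderiv ℝ (fun y => Real.log (q y ω₂)) x V with hgdef
  have hsm : AEStronglyMeasurable (fun ω₂ => g ω₂ ^ 2) (Measure.map κ ν) := by
    rw [hν, hq x]
    exact ((hL2' x V).aestronglyMeasurable.pow 2)
  calc ∫ ω, (fderiv ℝ (fun y => Real.log (p₁ y ω)) x V) ^ 2 ∂ν
      = ∫ ω, g (κ ω) ^ 2 ∂ν := by
        refine integral_congr_ae ?_
        filter_upwards [hνac.ae_le hC] with ω h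
        rw [h]
    _ = ∫ ω₂, g ω₂ ^ 2 ∂(Measure.map κ ν) := (integral_map hκ.aemeasurable hsm).symm
    _ = ∫ ω₂, (fderiv ℝ (fun y => Real.log (q y ω₂)) x V) ^ 2
          ∂(μ₂.withDensity (fun ω₂ => ENNReal.ofReal (q x ω₂))) := by
        rw [hν, hq x]
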